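/- Let X be n×k of rank k, Ω n×n positive definite, and K₁, K₂ k×k positive semidefinite. If both (i) K₁ X^T (Ω + X K₁ X^T)^{-1} = K₂ X^T (I_n + X K₂ X^T)^{-1} (the two Bayes linear estimators coincide for all y) and (ii) (Ω + X K₁ X^T)^{-1} Ω (Ω + X K₁ X^T)^{-1} = (I_n + X K₂ X^T)^{-2} (their residual sums of squares coincide for all y), then Ω = I_n and K₁ = K₂. Conversely, Ω = I_n and K₁ = K₂ trivially imply (i) and (ii). -/

import Mathlib

open Matrix

private lemma mulVec_inj_of_rank {n k : ℕ} (X : Matrix (Fin n) (Fin k) ℝ)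
    (hX : X.rank = k) {v : Fin k → ℝ} (hv : X *ᵥ v = 0) : v = 0 := by
  have hker : LinearMap.ker X.mulVecLin = ⊥ := by
    have h1 := X.mulVecLin.finrank_range_add_finrank_ker
    have h2 : Module.finrank ℝ (LinearMap.range X.mulVecLin) = k := hX
    rw [h2, Module.finrank_pi, Fintype.card_fin] at h1
    have h3 : Module.finrank ℝ (LinearMap.ker X.mulVecLin) = 0 := by omega
    exact Submodule.finrank_eq_zero.mp h3
  have : v ∈ LinearMap.ker X.mulVecLin := by
    simpa [LinearMap.mem_ker, Matrix.mulVecLin_apply] using hv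
  simpa [hker] using this

private lemma gram_posDef {n k : ℕ} (X : Matrix (Fin n) (Fin k) ℝ)
    (hX : X.rank = k) : (Xᵀ * X).PosDef := by
  refine Matrix.PosDef.of_dotProduct_mulVec_pos ?_ ?_
  · have := Matrix.isHermitian_conjTranspose_mul_self X
    simpa [Matrix.conjTranspose_eq_transpose_of_trivial] using this
  · intro x hx
    have hx' : X *ᵥ x ≠ 0 := fun h => hx (mulVec_inj_of_rank X hX h)
    have hdp : star x ⬝ᵥ (Xᵀ * X) *ᵥ x = (X *ᵥ x) ⬝ᵥ (X *ᵥ x) := by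
      rw [star_trivial, ← Matrix.mulVec_mulVec, Matrix.dotProduct_mulVec,
        Matrix.vecMul_transpose]
    rw [hdp]
    have h0 : (X *ᵥ x) ⬝ᵥ (X *ᵥ x) ≠ 0 := fun h =>
      hx' (dotProduct_self_eq_zero.mp h)
    have h1 : 0 ≤ (X *ᵥ x) ⬝ᵥ (X *ᵥ x) :=
      Finset.sum_nonneg fun i _ => mul_self_nonneg _
    exact lt_of_le_of_ne h1 (Ne.symm h0)

theorem stmt_19 {n k : ℕ} (hnk : k < n)
    (X : Matrix (Fin n) (Fin k) ℝ) (hX : X.rank = k)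
    (Ω : Matrix (Fin n) (Fin n) ℝ) (hΩ : Ω.PosDef)
    (K₁ K₂ : Matrix (Fin k) (Fin k) ℝ) (hK₁ : K₁.PosSemidef) (hK₂ : K₂.PosSemidef) :
    (K₁ * Xᵀ * (Ω + X * K₁ * Xᵀ)⁻¹ = K₂ * Xᵀ * (1 + X * K₂ * Xᵀ)⁻¹ ∧
      (Ω + X * K₁ * Xᵀ)⁻¹ * Ω * (Ω + X * K₁ * Xᵀ)⁻¹ =
        (1 + X * K₂ * Xᵀ)⁻¹ * (1 + X * K₂ * Xᵀ)⁻¹) ↔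
    (Ω = 1 ∧ K₁ = K₂) := by
  have hXK₁ : (X * K₁ * Xᵀ).PosSemidef := by
    have := hK₁.mul_mul_conjTranspose_same X
    simpa [Matrix.conjTranspose_eq_transpose_of_trivial, mul_assoc] using this
  have hXK₂ : (X * K₂ * Xᵀ).PosSemidef := by
    have := hK₂.mul_mul_conjTranspose_same X
    simpa [Matrix.conjTranspose_eq_transpose_of_trivial, mul_assoc] using this
  have hA : (Ω + X * K₁ * Xᵀ).PosDef := hΩ.add_posSemidef hXK₁
  have hB : ((1 : Matrix (Fin n) (Fin n) ℝ) + X * K₂ * Xᵀ).PosDef :=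
    Matrix.PosDef.add_posSemidef Matrix.PosDef.one hXK₂
  set A := Ω + X * K₁ * Xᵀ with hAdef
  set B := (1 : Matrix (Fin n) (Fin n) ℝ) + X * K₂ * Xᵀ with hBdef
  haveI := hA.isUnit.invertible
  haveI := hB.isUnit.invertible
  constructor
  · rintro ⟨h1, h2⟩
    -- multiply (i) on the left by X
    have h1' : X * K₁ * Xᵀ * A⁻¹ = X * K₂ * Xᵀ * B⁻¹ := by
      have := congrArg (fun M => X * M) h1
      simpa only [← Matrix.mul_assoc] using this
    -- Ω * A⁻¹ = B⁻¹
    have hOA : Ω * A⁻¹ = B⁻¹ := by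
      have e1 : X * K₁ * Xᵀ = A - Ω := by rw [hAdef]; exact (add_sub_cancel_left _ _).symm
      have e2 : X * K₂ * Xᵀ = B - 1 := by rw [hBdef]; exact (add_sub_cancel_left _ _).symm
      rw [e1, e2, sub_mul, sub_mul, Matrix.mul_inv_of_invertible,
        Matrix.mul_inv_of_invertible, one_mul] at h1'
      exact sub_right_injective h1'
    -- symmetry of A⁻¹, B⁻¹, Ω
    have hAsymm : Aᵀ = A := by
      have := hA.isHermitian
      rwa [Matrix.IsHermitian, Matrix.conjTranspose_eq_transpose_of_trivial] at this
    have hBsymm : Bᵀ = B := by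
      have := hB.isHermitian
      rwa [Matrix.IsHermitian, Matrix.conjTranspose_eq_transpose_of_trivial] at this
    have hΩsymm : Ωᵀ = Ω := by
      have := hΩ.isHermitian
      rwa [Matrix.IsHermitian, Matrix.conjTranspose_eq_transpose_of_trivial] at this
    have hAO : A⁻¹ * Ω = B⁻¹ := by
      have := congrArg Matrix.transpose hOA
      rwa [Matrix.transpose_mul, Matrix.transpose_nonsing_inv, hAsymm, hΩsymm,
        Matrix.transpose_nonsing_inv, hBsymm] at this
    -- A⁻¹ = B⁻¹
    have hinv : A⁻¹ = B⁻¹ := by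
      have h2' : B⁻¹ * A⁻¹ = B⁻¹ * B⁻¹ := by
        calc B⁻¹ * A⁻¹ = A⁻¹ * Ω * A⁻¹ := by rw [hAO]
          _ = B⁻¹ * B⁻¹ := h2
      have := congrArg (fun M => B * M) h2'
      simpa [← mul_assoc, Matrix.mul_inv_of_invertible] using this
    have hAB : A = B := by
      have := congrArg (fun M => M⁻¹) hinv
      simpa [Matrix.inv_inv_of_invertible] using this
    -- Ω = 1
    have hΩ1 : Ω = 1 := by
      have : Ω * A⁻¹ = A⁻¹ := by rw [hOA, hinv]
      have := congrArg (fun M => M * A) this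
      simpa [mul_assoc, Matrix.inv_mul_of_invertible] using this
    refine ⟨hΩ1, ?_⟩
    -- X K₁ Xᵀ = X K₂ Xᵀ
    have hXKX : X * K₁ * Xᵀ = X * K₂ * Xᵀ := by
      have : Ω + X * K₁ * Xᵀ = 1 + X * K₂ * Xᵀ := hAB
      rw [hΩ1] at this
      exact add_left_cancel this
    -- cancel using Gram matrix
    have hG := gram_posDef X hX
    haveI := hG.isUnit.invertible
    have hGK : (Xᵀ * X) * K₁ * (Xᵀ * X) = (Xᵀ * X) * K₂ * (Xᵀ * X) := by
      have := congrArg (fun M => Xᵀ * M * X) hXKX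
      simpa only [← Matrix.mul_assoc] using this
    have step1 : K₁ * (Xᵀ * X) = K₂ * (Xᵀ * X) := by
      have := congrArg (fun M => (Xᵀ * X)⁻¹ * M) hGK
      simpa [← mul_assoc, Matrix.inv_mul_of_invertible] using this
    have := congrArg (fun M => M * (Xᵀ * X)⁻¹) step1
    simpa [mul_assoc, Matrix.mul_inv_of_invertible] using this
  · rintro ⟨hΩ1, hK⟩
    subst hK
    have hABeq : A = B := by rw [hAdef, hBdef, hΩ1]
    rw [hABeq, hΩ1]
    simp
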